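/- Let (Q₋₁ ⊆ P₋₁ ⊆ P₀, Q₋₁ ⊆ Q₀ ⊆ P₀, τ) be a commuting square and suppose p₀ ∈ Q₋₁' ∩ P₋₁ and q₀ ∈ Q₋₁' ∩ Q₀ are hermitian elements with p₀q₀ = q₀p₀. Then for every t ∈ ℝ, setting U_t = exp(i t p₀ q₀), the quadruple (Q₋₁ ⊆ P₋₁ ⊆ P₀, Q₋₁ ⊆ U_t* Q₀ U_t ⊆ P₀, τ) is again a commuting square; equivalently, τ(p · U_t* q U_t) = τ(p q) for all p ∈ P₋₁ with E_{Q₋₁}(p) = 0 and all q ∈ Q₀. -/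

import Mathlib

open Matrix

/-- `E` is the `τ`-preserving conditional expectation of `Mₙ(ℂ)` onto the unital
*-subalgebra `B`. -/
def IsCondExp {n : ℕ} (τ : Matrix (Fin n) (Fin n) ℂ →ₗ[ℂ] ℂ)
    (B : StarSubalgebra ℂ (Matrix (Fin n) (Fin n) ℂ))
    (E : Matrix (Fin n) (Fin n) ℂ →ₗ[ℂ] Matrix (Fin n) (Fin n) ℂ) : Prop :=
  (∀ x, E x ∈ B) ∧ (∀ b ∈ B, E b = b) ∧ ∀ x, ∀ b ∈ B, τ (bᴴ * (x - E x)) = 0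

set_option maxHeartbeats 2000000 in
/-- Given a commuting square `(Q₋₁ ⊆ P₋₁ ⊆ P₀, Q₋₁ ⊆ Q₀ ⊆ P₀, τ)` in `P₀ = Mₙ(ℂ)` and
hermitian `p₀ ∈ Q₋₁' ∩ P₋₁`, `q₀ ∈ Q₋₁' ∩ Q₀` with `p₀q₀ = q₀p₀`, for every `t ∈ ℝ` and
`U_t = exp(i t p₀ q₀)`, the deformed quadruple `(Q₋₁ ⊆ P₋₁ ⊆ P₀, Q₋₁ ⊆ U_t* Q₀ U_t ⊆ P₀, τ)`
is a commuting square; equivalently `τ(p·U_t*·q·U_t) = τ(pq)` for all `p ∈ P₋₁` with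
`E_{Q₋₁}(p) = 0` and all `q ∈ Q₀`. -/
theorem one_parameter_family_commuting_square {n : ℕ}
    (τ : Matrix (Fin n) (Fin n) ℂ →ₗ[ℂ] ℂ)
    (htr : ∀ x y, τ (x * y) = τ (y * x)) (hτ1 : τ 1 = 1)
    (hfaith : ∀ x, τ (xᴴ * x) = 0 → x = 0)
    (Qm Pm Q0 : StarSubalgebra ℂ (Matrix (Fin n) (Fin n) ℂ))
    (hQP : Qm ≤ Pm) (hQQ : Qm ≤ Q0)
    (EPm EQ0 EQm : Matrix (Fin n) (Fin n) ℂ →ₗ[ℂ] Matrix (Fin n) (Fin n) ℂ)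
    (hEP : IsCondExp τ Pm EPm) (hEQ0 : IsCondExp τ Q0 EQ0) (hEQm : IsCondExp τ Qm EQm)
    (hcs : ∀ x, EPm (EQ0 x) = EQm x)
    (p₀ q₀ : Matrix (Fin n) (Fin n) ℂ)
    (hp₀P : p₀ ∈ Pm) (hp₀c : ∀ y ∈ Qm, p₀ * y = y * p₀) (hp₀h : p₀ᴴ = p₀)
    (hq₀Q : q₀ ∈ Q0) (hq₀c : ∀ y ∈ Qm, q₀ * y = y * q₀) (hq₀h : q₀ᴴ = q₀)
    (hcomm : p₀ * q₀ = q₀ * p₀) :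
    ∀ t : ℝ, ∀ p ∈ Pm, EQm p = 0 → ∀ q ∈ Q0,
      τ (p * (NormedSpace.exp ((Complex.I * t) • (p₀ * q₀)))ᴴ * q *
          NormedSpace.exp ((Complex.I * t) • (p₀ * q₀))) = τ (p * q) := by
  classical
  intro t p hp _hEp q hq
  -- Lemma A : for `a ∈ Pm`, `b ∈ Q0`, `τ (a*b) = τ (a * EQm b)`.
  have lemA : ∀ a ∈ Pm, ∀ b ∈ Q0, τ (a * b) = τ (a * EQm b) := by
    intro a ha b hb
    have haH : aᴴ ∈ Pm := by
      rw [← Matrix.star_eq_conjTranspose]; exact star_mem ha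
    have h1 := hEP.2.2 b aᴴ haH
    rw [conjTranspose_conjTranspose, mul_sub, map_sub, sub_eq_zero] at h1
    have h2 := hcs b
    rw [hEQ0.2.1 b hb] at h2
    rw [h1, h2]
  -- Lemma B : `EQm (x * q₀) = EQm (q₀ * x)`.
  have lemB : ∀ x, EQm (x * q₀) = EQm (q₀ * x) := by
    intro x
    have hdQ : EQm (q₀ * x) - EQm (x * q₀) ∈ Qm := sub_mem (hEQm.1 _) (hEQm.1 _)
    have hdH : (EQm (q₀ * x) - EQm (x * q₀))ᴴ ∈ Qm := by
      rw [← Matrix.star_eq_conjTranspose]; exact star_mem hdQ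
    have h1 := hEQm.2.2 (q₀ * x) _ hdQ
    have h2 := hEQm.2.2 (x * q₀) _ hdQ
    rw [mul_sub, map_sub, sub_eq_zero] at h1 h2
    have h3 : τ ((EQm (q₀ * x) - EQm (x * q₀))ᴴ * (x * q₀))
        = τ ((EQm (q₀ * x) - EQm (x * q₀))ᴴ * (q₀ * x)) := by
      set D := (EQm (q₀ * x) - EQm (x * q₀))ᴴ with hD
      have hcq : q₀ * D = D * q₀ := hq₀c D hdH
      calc τ (D * (x * q₀)) = τ ((D * x) * q₀) := by rw [mul_assoc]
        _ = τ (q₀ * (D * x)) := (htr _ _).symm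
        _ = τ ((q₀ * D) * x) := by rw [mul_assoc]
        _ = τ ((D * q₀) * x) := by rw [hcq]
        _ = τ (D * (q₀ * x)) := by rw [mul_assoc]
    have h4 : τ ((EQm (q₀ * x) - EQm (x * q₀))ᴴ *
        (EQm (q₀ * x) - EQm (x * q₀))) = 0 := by
      rw [mul_sub, map_sub, ← h1, ← h2, h3, sub_self]
    have h5 := hfaith _ h4
    exact (sub_eq_zero.mp h5).symm
  -- Iterated form of Lemma B.
  have lemB' : ∀ (x : Matrix (Fin n) (Fin n) ℂ) (l k : ℕ),
      EQm (q₀ ^ k * x * q₀ ^ l) = EQm (q₀ ^ (k + l) * x) := by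
    intro x l
    induction l with
    | zero => intro k; simp
    | succ l ih =>
      intro k
      calc EQm (q₀ ^ k * x * q₀ ^ (l + 1))
          = EQm ((q₀ ^ k * x * q₀ ^ l) * q₀) := by
            rw [pow_succ, mul_assoc (q₀ ^ k * x)]
        _ = EQm (q₀ * (q₀ ^ k * x * q₀ ^ l)) := lemB _
        _ = EQm (q₀ ^ (k + 1) * x * q₀ ^ l) := by
            simp only [pow_succ', mul_assoc]
        _ = EQm (q₀ ^ (k + 1 + l) * x) := ih (k + 1)
        _ = EQm (q₀ ^ (k + (l + 1)) * x) := by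
            rw [show k + 1 + l = k + (l + 1) by omega]
  have hC : Commute p₀ q₀ := hcomm
  -- The key fact: `τ (p Bᵏ q Bˡ)` only depends on `k + l`.
  have key : ∀ k l : ℕ, τ (p * (p₀ * q₀) ^ k * q * (p₀ * q₀) ^ l)
      = τ (p₀ ^ (k + l) * p * (q₀ ^ (k + l) * q)) := by
    intro k l
    have haP : p₀ ^ l * p * p₀ ^ k ∈ Pm :=
      mul_mem (mul_mem (pow_mem hp₀P l) hp) (pow_mem hp₀P k)
    have hbQ : q₀ ^ k * q * q₀ ^ l ∈ Q0 :=
      mul_mem (mul_mem (pow_mem hq₀Q k) hq) (pow_mem hq₀Q l)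
    have haP' : p₀ ^ (k + l) * p ∈ Pm := mul_mem (pow_mem hp₀P _) hp
    have hbQ' : q₀ ^ (k + l) * q ∈ Q0 := mul_mem (pow_mem hq₀Q _) hq
    have hcQ : EQm (q₀ ^ (k + l) * q) ∈ Qm := hEQm.1 _
    have hpc : p₀ ^ k * EQm (q₀ ^ (k + l) * q) = EQm (q₀ ^ (k + l) * q) * p₀ ^ k :=
      ((Commute.pow_left (a := p₀) (b := EQm (q₀ ^ (k + l) * q))
        (hp₀c _ hcQ) k)).eq
    calc τ (p * (p₀ * q₀) ^ k * q * (p₀ * q₀) ^ l)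
        = τ (p * (p₀ ^ k * q₀ ^ k) * q * (q₀ ^ l * p₀ ^ l)) := by
          rw [hC.mul_pow k, hC.mul_pow l, (hC.pow_pow l l).eq]
      _ = τ ((p * p₀ ^ k * q₀ ^ k * q * q₀ ^ l) * p₀ ^ l) := by
          simp only [mul_assoc]
      _ = τ (p₀ ^ l * (p * p₀ ^ k * q₀ ^ k * q * q₀ ^ l)) := htr _ _
      _ = τ ((p₀ ^ l * p * p₀ ^ k) * (q₀ ^ k * q * q₀ ^ l)) := by
          simp only [mul_assoc]
      _ = τ ((p₀ ^ l * p * p₀ ^ k) * EQm (q₀ ^ k * q * q₀ ^ l)) := lemA _ haP _ hbQ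
      _ = τ ((p₀ ^ l * p * p₀ ^ k) * EQm (q₀ ^ (k + l) * q)) := by rw [lemB' q l k]
      _ = τ ((p₀ ^ l * p * EQm (q₀ ^ (k + l) * q)) * p₀ ^ k) := by
          simp only [mul_assoc, hpc]
      _ = τ (p₀ ^ k * (p₀ ^ l * p * EQm (q₀ ^ (k + l) * q))) := htr _ _
      _ = τ ((p₀ ^ (k + l) * p) * EQm (q₀ ^ (k + l) * q)) := by
          simp only [pow_add, mul_assoc]
      _ = τ ((p₀ ^ (k + l) * p) * (q₀ ^ (k + l) * q)) := (lemA _ haP' _ hbQ').symm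
  -- Now the analytic part.
  letI : SeminormedRing (Matrix (Fin n) (Fin n) ℂ) := Matrix.linftyOpSemiNormedRing
  letI : NormedRing (Matrix (Fin n) (Fin n) ℂ) := Matrix.linftyOpNormedRing
  letI : NormedAlgebra ℂ (Matrix (Fin n) (Fin n) ℂ) := Matrix.linftyOpNormedAlgebra
  set z : ℂ := Complex.I * (t : ℂ) with hzdef
  set A : Matrix (Fin n) (Fin n) ℂ := z • (p₀ * q₀) with hA
  have hstz : star z = -z := by
    simp only [hzdef, Complex.star_def, _root_.map_mul, Complex.conj_I,
      Complex.conj_ofReal]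
    ring
  have hAh : Aᴴ = -A := by
    rw [hA, conjTranspose_smul, conjTranspose_mul, hp₀h, hq₀h, ← hcomm, hstz, neg_smul]
  have hexpH : (NormedSpace.exp A)ᴴ = NormedSpace.exp (-A) := by
    rw [← Matrix.exp_conjTranspose, hAh]
  have hnegA : -A = (-z) • (p₀ * q₀) := by rw [hA, neg_smul]
  -- summability facts
  have hs1 : Summable fun k : ℕ => (Nat.factorial k : ℂ)⁻¹ • (-A) ^ k :=
    NormedSpace.expSeries_summable' (𝕂 := ℂ) (-A)
  have hs2 : Summable fun l : ℕ => (Nat.factorial l : ℂ)⁻¹ • A ^ l :=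
    NormedSpace.expSeries_summable' (𝕂 := ℂ) A
  have hn1 : Summable fun k : ℕ => ‖(Nat.factorial k : ℂ)⁻¹ • (-A) ^ k‖ :=
    NormedSpace.norm_expSeries_summable' (𝕂 := ℂ) (-A)
  have hn2 : Summable fun l : ℕ => ‖(Nat.factorial l : ℂ)⁻¹ • A ^ l‖ :=
    NormedSpace.norm_expSeries_summable' (𝕂 := ℂ) A
  have hnf : Summable fun k : ℕ => ‖p * ((Nat.factorial k : ℂ)⁻¹ • (-A) ^ k) * q‖ := by
    refine Summable.of_nonneg_of_le (fun k => norm_nonneg _) (fun k => ?_)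
      (hn1.mul_left (‖p‖ * ‖q‖))
    calc ‖p * ((Nat.factorial k : ℂ)⁻¹ • (-A) ^ k) * q‖
        ≤ ‖p * ((Nat.factorial k : ℂ)⁻¹ • (-A) ^ k)‖ * ‖q‖ := norm_mul_le _ _
      _ ≤ ‖p‖ * ‖(Nat.factorial k : ℂ)⁻¹ • (-A) ^ k‖ * ‖q‖ :=
          mul_le_mul_of_nonneg_right (norm_mul_le _ _) (norm_nonneg _)
      _ = ‖p‖ * ‖q‖ * ‖(Nat.factorial k : ℂ)⁻¹ • (-A) ^ k‖ := by ring
  have hsf : Summable fun k : ℕ => p * ((Nat.factorial k : ℂ)⁻¹ • (-A) ^ k) * q :=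
    (hs1.mul_left p).mul_right q
  -- the matrix-level Cauchy product
  have hGoal : p * (NormedSpace.exp A)ᴴ * q * NormedSpace.exp A
      = ∑' N : ℕ, ∑ kl ∈ Finset.HasAntidiagonal.antidiagonal N,
          (p * ((Nat.factorial kl.1 : ℂ)⁻¹ • (-A) ^ kl.1) * q) * ((Nat.factorial kl.2 : ℂ)⁻¹ • A ^ kl.2) := by
    rw [hexpH]
    have e1 : p * NormedSpace.exp (-A) * q
        = ∑' k : ℕ, p * ((Nat.factorial k : ℂ)⁻¹ • (-A) ^ k) * q := by
      simp only [NormedSpace.exp_eq_tsum ℂ]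
      rw [← Summable.tsum_mul_left p hs1, ← Summable.tsum_mul_right q (hs1.mul_left p)]
    have e2 : NormedSpace.exp A = ∑' l : ℕ, (Nat.factorial l : ℂ)⁻¹ • A ^ l := by
      simp only [NormedSpace.exp_eq_tsum ℂ]
    rw [e1, e2]
    exact tsum_mul_tsum_eq_tsum_sum_antidiagonal_of_summable_norm hnf hn2
  have hsum3 : Summable fun N : ℕ => ∑ kl ∈ Finset.HasAntidiagonal.antidiagonal N,
      (p * ((Nat.factorial kl.1 : ℂ)⁻¹ • (-A) ^ kl.1) * q) *
        ((Nat.factorial kl.2 : ℂ)⁻¹ • A ^ kl.2) :=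
    (summable_norm_sum_mul_antidiagonal_of_summable_norm hnf hn2).of_norm
  -- apply τ
  have hmap := ContinuousLinearMap.map_tsum (LinearMap.toContinuousLinearMap τ) hsum3
  simp only [LinearMap.coe_toContinuousLinearMap'] at hmap
  -- evaluate each term
  have hterm : ∀ N : ℕ, τ (∑ kl ∈ Finset.HasAntidiagonal.antidiagonal N,
      (p * ((Nat.factorial kl.1 : ℂ)⁻¹ • (-A) ^ kl.1) * q) * ((Nat.factorial kl.2 : ℂ)⁻¹ • A ^ kl.2))
      = (∑ kl ∈ Finset.HasAntidiagonal.antidiagonal N,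
          (Nat.factorial kl.1 : ℂ)⁻¹ * (-z) ^ kl.1 * ((Nat.factorial kl.2 : ℂ)⁻¹ * z ^ kl.2)) *
        τ (p₀ ^ N * p * (q₀ ^ N * q)) := by
    intro N
    rw [map_sum, Finset.sum_mul]
    refine Finset.sum_congr rfl fun kl hkl => ?_
    have hklN : kl.1 + kl.2 = N := Finset.HasAntidiagonal.mem_antidiagonal.mp hkl
    have hmat : (p * ((Nat.factorial kl.1 : ℂ)⁻¹ • (-A) ^ kl.1) * q) * ((Nat.factorial kl.2 : ℂ)⁻¹ • A ^ kl.2)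
        = ((Nat.factorial kl.1 : ℂ)⁻¹ * (-z) ^ kl.1 * ((Nat.factorial kl.2 : ℂ)⁻¹ * z ^ kl.2)) •
          (p * (p₀ * q₀) ^ kl.1 * q * (p₀ * q₀) ^ kl.2) := by
      rw [hnegA, hA, smul_pow, smul_pow]
      simp only [smul_mul_assoc, mul_smul_comm, smul_smul]
      congr 1
      ring
    rw [hmat, _root_.map_smul, smul_eq_mul, key kl.1 kl.2, hklN]
  -- the scalar sums
  have hscalar : ∀ N : ℕ, (∑ kl ∈ Finset.HasAntidiagonal.antidiagonal N,
      (Nat.factorial kl.1 : ℂ)⁻¹ * (-z) ^ kl.1 * ((Nat.factorial kl.2 : ℂ)⁻¹ * z ^ kl.2))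
      = if N = 0 then 1 else 0 := by
    intro N
    cases N with
    | zero => simp
    | succ N =>
      rw [if_neg (Nat.succ_ne_zero N)]
      have hap := add_pow (-z) z (N + 1)
      rw [neg_add_cancel, zero_pow (Nat.succ_ne_zero N)] at hap
      rw [Finset.Nat.sum_antidiagonal_eq_sum_range_succ
        (fun k l => (Nat.factorial k : ℂ)⁻¹ * (-z) ^ k * ((Nat.factorial l : ℂ)⁻¹ * z ^ l))]
      have hcongr : ∀ k ∈ Finset.range (N + 1 + 1),
          (Nat.factorial k : ℂ)⁻¹ * (-z) ^ k * ((Nat.factorial (N + 1 - k) : ℂ)⁻¹ * z ^ (N + 1 - k))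
          = (Nat.factorial (N + 1) : ℂ)⁻¹ *
            ((-z) ^ k * z ^ (N + 1 - k) * ((N + 1).choose k : ℂ)) := by
        intro k hk
        have hk' : k ≤ N + 1 := Nat.lt_succ_iff.mp (Finset.mem_range.mp hk)
        have hfact := Nat.choose_mul_factorial_mul_factorial hk'
        have hcast : (((N + 1).choose k : ℂ) * (Nat.factorial k : ℂ)) * (Nat.factorial (N + 1 - k) : ℂ)
            = (Nat.factorial (N + 1) : ℂ) := by exact_mod_cast congrArg (Nat.cast (R := ℂ)) hfact
        have h1 : (Nat.factorial k : ℂ) ≠ 0 := Nat.cast_ne_zero.mpr (Nat.factorial_ne_zero _)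
        have h2 : (Nat.factorial (N + 1 - k) : ℂ) ≠ 0 := Nat.cast_ne_zero.mpr (Nat.factorial_ne_zero _)
        have h3 : (Nat.factorial (N + 1) : ℂ) ≠ 0 := Nat.cast_ne_zero.mpr (Nat.factorial_ne_zero _)
        field_simp
        rw [← hcast]
        ring
      rw [Finset.sum_congr rfl hcongr, ← Finset.mul_sum, ← hap]
      ring
  -- put everything together
  have hτpq : τ (p₀ ^ 0 * p * (q₀ ^ 0 * q)) = τ (p * q) := by
    rw [pow_zero, pow_zero, one_mul, one_mul]
  calc τ (p * (NormedSpace.exp A)ᴴ * q * NormedSpace.exp A)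
      = τ (∑' N : ℕ, ∑ kl ∈ Finset.HasAntidiagonal.antidiagonal N,
          (p * ((Nat.factorial kl.1 : ℂ)⁻¹ • (-A) ^ kl.1) * q) * ((Nat.factorial kl.2 : ℂ)⁻¹ • A ^ kl.2)) :=
        congrArg τ hGoal
    _ = ∑' N : ℕ, τ (∑ kl ∈ Finset.HasAntidiagonal.antidiagonal N,
          (p * ((Nat.factorial kl.1 : ℂ)⁻¹ • (-A) ^ kl.1) * q) * ((Nat.factorial kl.2 : ℂ)⁻¹ • A ^ kl.2)) := hmap
    _ = ∑' N : ℕ, (if N = 0 then (1 : ℂ) else 0) * τ (p₀ ^ N * p * (q₀ ^ N * q)) := by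
        refine tsum_congr fun N => ?_
        rw [hterm N, hscalar N]
    _ = (if 0 = 0 then (1 : ℂ) else 0) * τ (p₀ ^ 0 * p * (q₀ ^ 0 * q)) := by
        refine tsum_eq_single 0 fun N hN => ?_
        rw [if_neg hN, zero_mul]
    _ = τ (p * q) := by rw [if_pos rfl, one_mul, hτpq]
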